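/- Let G be a finite simple graph, k a natural number, and v a vertex of G. Suppose (C₁, C₂) is a partition of N(v) with |C₁| ≥ |C₂| ≥ 1 and k ≥ |C₂| such that: (i) both C₁ and C₂ are cliques in G; and (ii) letting M be the set of pairs {c₁, c₂} with c₁ ∈ C₁, c₂ ∈ C₂ and c₁ not adjacent to c₂ in G, every vertex c₁ ∈ C₁ belongs to precisely one pair in M. Let G' be the graph obtained from G by deleting v and all vertices of C₂, and then, for every pair {c₁, c₂} ∈ M with c₁ ∈ C₁ and c₂ ∈ C₂, adding all edges between c₁ and the vertices of N_G(c₂) \ ({v} ∪ C₂ ∪ {c₁}). Then G has a vertex cover of size at most k if and only if G' has a vertex cover of size at most k − |C₂|. -/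
import Mathlib


/-- `X` is a vertex cover of `G`: every edge has at least one endpoint in `X`. -/
def IsVC {V : Type*} (G : SimpleGraph V) (X : Set V) : Prop :=
  ∀ ⦃u w : V⦄, G.Adj u w → u ∈ X ∨ w ∈ X

/-- `G` has a vertex cover of size at most `k`. -/
def HasVC {V : Type*} (G : SimpleGraph V) (k : ℕ) : Prop :=
  ∃ X : Set V, IsVC G X ∧ X.ncard ≤ k

/-- The graph `G'` obtained from `G` by deleting `v` and all of `C₂` and, for every
non-adjacent pair `(c₁, c₂)` with `c₁ ∈ C₁` and `c₂ ∈ C₂` (i.e., every pair of `M`),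
adding all edges between `c₁` and the vertices of `N_G(c₂) \ ({v} ∪ C₂ ∪ {c₁})`. -/
def ReduceCliques {V : Type*} (G : SimpleGraph V) (v : V) (C₁ C₂ : Finset V) :
    SimpleGraph {w : V // w ≠ v ∧ w ∉ C₂} :=
  SimpleGraph.fromRel (fun w w' =>
    G.Adj w.1 w'.1 ∨
      (w.1 ∈ C₁ ∧ ∃ c₂ ∈ C₂, ¬ G.Adj w.1 c₂ ∧ G.Adj c₂ w'.1))

set_option linter.unusedVariables false

lemma clique_diff_subsingleton {V : Type*} {G : SimpleGraph V} {X S : Set V}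
    (hX : IsVC G X) (hS : G.IsClique S) : (S \ X).Subsingleton := by
  intro a ha b hb
  by_contra hne
  rcases hX (hS ha.1 hb.1 hne) with h | h
  · exact ha.2 h
  · exact hb.2 h

lemma ncard_val_mem {V : Type*} [Fintype V] (v : V) (C₂ : Finset V) (T : Set V) :
    {w : {x : V // x ≠ v ∧ x ∉ C₂} | w.1 ∈ T}.ncard = (T \ ({v} ∪ ↑C₂)).ncard := by
  rw [← Set.ncard_image_of_injective _ Subtype.val_injective]
  congr 1
  ext x
  simp [Set.mem_image]

theorem stmt_11 {V : Type*} [Fintype V] [DecidableEq V] (G : SimpleGraph V) (k : ℕ)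
    (v : V) (C₁ C₂ : Finset V)
    -- (C₁, C₂) is a partition of N(v)
    (hpart : (↑C₁ ∪ ↑C₂ : Set V) = G.neighborSet v) (hdisj : Disjoint C₁ C₂)
    (hcard : C₂.card ≤ C₁.card) (hC₂ne : 1 ≤ C₂.card) (hk : C₂.card ≤ k)
    -- (i) C₁ and C₂ are cliques
    (hclique₁ : G.IsClique ↑C₁) (hclique₂ : G.IsClique ↑C₂)
    -- (ii) every c₁ ∈ C₁ lies in precisely one non-adjacent pair of M
    (hM : ∀ c₁ ∈ C₁, ∃! c₂, c₂ ∈ C₂ ∧ ¬ G.Adj c₁ c₂) :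
    HasVC G k ↔ HasVC (ReduceCliques G v C₁ C₂) (k - C₂.card) := by
  have hadj : ∀ c, c ∈ C₁ ∪ C₂ → G.Adj v c := by
    intro c hc
    have : c ∈ (↑C₁ ∪ ↑C₂ : Set V) := by
      simp only [Finset.mem_union] at hc
      simpa using hc
    rw [hpart] at this
    exact this
  have hvC₁ : v ∉ C₁ := fun h => G.irrefl (hadj v (Finset.mem_union_left _ h))
  have hvC₂ : v ∉ C₂ := fun h => G.irrefl (hadj v (Finset.mem_union_right _ h))
  have hG' : ∀ (a b : {w : V // w ≠ v ∧ w ∉ C₂}), (ReduceCliques G v C₁ C₂).Adj a b ↔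
      a ≠ b ∧ ((G.Adj a.1 b.1 ∨ (a.1 ∈ C₁ ∧ ∃ c₂ ∈ C₂, ¬ G.Adj a.1 c₂ ∧ G.Adj c₂ b.1)) ∨
        (G.Adj b.1 a.1 ∨ (b.1 ∈ C₁ ∧ ∃ c₂ ∈ C₂, ¬ G.Adj b.1 c₂ ∧ G.Adj c₂ a.1))) :=
    fun a b => SimpleGraph.fromRel_adj _ a b
  have hcliquevC₂ : G.IsClique ({v} ∪ ↑C₂ : Set V) := by
    rw [Set.singleton_union]
    exact hclique₂.insert (fun b hb hbv => (hadj b (Finset.mem_union_right _ hb)))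
  constructor
  · rintro ⟨X, hX, hXk⟩
    have hDss := clique_diff_subsingleton hX hcliquevC₂
    by_cases hbX : ∀ b ∈ C₂, b ∈ X
    · -- C₂ ⊆ X
      refine ⟨{w | w.1 ∈ X ∪ ↑C₁}, ?_, ?_⟩
      · intro a b hab
        rw [hG'] at hab
        obtain ⟨-, h | h⟩ := hab
        · rcases h with h | ⟨h, -⟩
          · exact (hX h).imp Or.inl Or.inl
          · exact Or.inl (Or.inr h)
        · rcases h with h | ⟨h, -⟩
          · exact ((hX h).imp Or.inl Or.inl).symm
          · exact Or.inr (Or.inr h)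
      · rw [ncard_val_mem]
        have hC₂sub : (↑C₂ : Set V) ⊆ X := fun b hb => hbX b hb
        by_cases haX : ∀ a ∈ C₁, a ∈ X
        · have hXC₁ : X ∪ ↑C₁ = X := Set.union_eq_self_of_subset_right (fun a ha => haX a ha)
          rw [hXC₁]
          have h1 : X \ ({v} ∪ ↑C₂) ⊆ X \ ↑C₂ := Set.diff_subset_diff_right Set.subset_union_right
          have h2 : (X \ (↑C₂ : Set V)).ncard = X.ncard - C₂.card := by
            rw [Set.ncard_diff hC₂sub, Set.ncard_coe_finset]
          have h3 := Set.ncard_le_ncard h1 (Set.toFinite _)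
          omega
        · push_neg at haX
          obtain ⟨a, haC₁, haX⟩ := haX
          have hvX : v ∈ X := (hX (hadj a (Finset.mem_union_left _ haC₁))).resolve_right haX
          have hAss := clique_diff_subsingleton hX hclique₁
          have hsub : (X ∪ ↑C₁) \ ({v} ∪ ↑C₂) ⊆ (X \ ({v} ∪ ↑C₂)) ∪ {a} := by
            intro x hx
            rcases hx.1 with hxX | hxC₁
            · exact Or.inl ⟨hxX, hx.2⟩
            · by_cases hxX : x ∈ X
              · exact Or.inl ⟨hxX, hx.2⟩
              · exact Or.inr (hAss ⟨hxC₁, hxX⟩ ⟨haC₁, haX⟩)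
          have hvCsub : ({v} ∪ ↑C₂ : Set V) ⊆ X := by
            intro x hx
            rcases hx with hx | hx
            · exact hx ▸ hvX
            · exact hC₂sub hx
          have hvCcard : ({v} ∪ ↑C₂ : Set V).ncard = C₂.card + 1 := by
            rw [Set.singleton_union, Set.ncard_insert_of_notMem (by simpa using hvC₂),
              Set.ncard_coe_finset]
          have h1 := Set.ncard_le_ncard hsub (Set.toFinite _)
          have h2 := Set.ncard_union_le (X \ ({v} ∪ ↑C₂)) ({a} : Set V)
          have h3 : (X \ ({v} ∪ ↑C₂)).ncard = X.ncard - ({v} ∪ ↑C₂ : Set V).ncard :=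
            Set.ncard_diff hvCsub
          have h4 := Set.ncard_le_ncard hvCsub (Set.toFinite _)
          have h5 : ({a} : Set V).ncard = 1 := Set.ncard_singleton a
          omega
    · -- some b ∈ C₂ not in X
      push_neg at hbX
      obtain ⟨b, hbC₂, hbX⟩ := hbX
      have hbmem : b ∈ (({v} ∪ ↑C₂ : Set V) \ X) := ⟨Or.inr (by simpa using hbC₂), hbX⟩
      have hbv : b ≠ v := fun h => hvC₂ (h ▸ hbC₂)
      have hvX : v ∈ X := by
        by_contra hv
        exact hbv (hDss hbmem ⟨Or.inl rfl, hv⟩)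
      have hC₂X : ∀ c ∈ C₂, c ≠ b → c ∈ X := by
        intro c hc hcb
        by_contra hcX
        exact hcb (hDss ⟨Or.inr (by simpa using hc), hcX⟩ hbmem)
      have hbN : ∀ w, G.Adj b w → w ∈ X := fun w hw => (hX hw).resolve_left hbX
      refine ⟨{w | w.1 ∈ X}, ?_, ?_⟩
      · intro x y hxy
        rw [hG'] at hxy
        have key : ∀ (p q : {w : V // w ≠ v ∧ w ∉ C₂}),
            (G.Adj p.1 q.1 ∨ (p.1 ∈ C₁ ∧ ∃ c₂ ∈ C₂, ¬ G.Adj p.1 c₂ ∧ G.Adj c₂ q.1)) →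
            p.1 ∈ X ∨ q.1 ∈ X := by
          intro p q h
          rcases h with h | ⟨hpC₁, c₂, hc₂, hnadj, hadj'⟩
          · exact hX h
          · by_cases hpX : p.1 ∈ X
            · exact Or.inl hpX
            · have hnb : ¬ G.Adj p.1 b := by
                intro hab
                rcases hX hab with h | h
                · exact hpX h
                · exact hbX h
              obtain ⟨c, -, hu⟩ := hM p.1 hpC₁
              have h1 : c₂ = c := hu c₂ ⟨hc₂, hnadj⟩
              have h2 : b = c := hu b ⟨hbC₂, hnb⟩
              exact Or.inr (hbN q.1 ((h1.trans h2.symm) ▸ hadj'))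
        obtain ⟨-, h | h⟩ := hxy
        · exact key x y h
        · exact (key y x h).symm
      · rw [ncard_val_mem]
        set T : Set V := ({v} ∪ ↑C₂) \ {b} with hT
        have hTsub : T ⊆ X := by
          intro x hx
          rcases hx.1 with h | h
          · exact h ▸ hvX
          · exact hC₂X x (by simpa using h) hx.2
        have hsub : X \ ({v} ∪ ↑C₂) ⊆ X \ T := Set.diff_subset_diff_right Set.diff_subset
        have hvCcard : ({v} ∪ ↑C₂ : Set V).ncard = C₂.card + 1 := by
          rw [Set.singleton_union, Set.ncard_insert_of_notMem (by simpa using hvC₂),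
            Set.ncard_coe_finset]
        have hTcard : T.ncard = C₂.card := by
          rw [hT, Set.ncard_diff (by simpa using hbmem.1), hvCcard, Set.ncard_singleton]
          omega
        have h1 := Set.ncard_le_ncard hsub (Set.toFinite _)
        have h2 : (X \ T).ncard = X.ncard - T.ncard := Set.ncard_diff hTsub
        omega
  · rintro ⟨X', hX', hk'⟩
    set S : Set V := Subtype.val '' X' with hS
    have hScard : S.ncard = X'.ncard := Set.ncard_image_of_injective _ Subtype.val_injective
    have hmemS : ∀ (w : {x : V // x ≠ v ∧ x ∉ C₂}), w ∈ X' → w.1 ∈ S := fun w hw => ⟨w, hw, rfl⟩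
    by_cases hC₁S : ∀ a ∈ C₁, a ∈ S
    · refine ⟨S ∪ ↑C₂, ?_, ?_⟩
      · intro x y hxy
        by_cases hx2 : x ∈ C₂
        · exact Or.inl (Or.inr (by simpa using hx2))
        by_cases hy2 : y ∈ C₂
        · exact Or.inr (Or.inr (by simpa using hy2))
        by_cases hxv : x = v
        · subst hxv
          have : y ∈ (↑C₁ ∪ ↑C₂ : Set V) := by rw [hpart]; exact hxy
          rcases this with h | h
          · exact Or.inr (Or.inl (hC₁S y (by simpa using h)))
          · exact absurd (by simpa using h) hy2
        by_cases hyv : y = v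
        · subst hyv
          have : x ∈ (↑C₁ ∪ ↑C₂ : Set V) := by rw [hpart]; exact hxy.symm
          rcases this with h | h
          · exact Or.inl (Or.inl (hC₁S x (by simpa using h)))
          · exact absurd (by simpa using h) hx2
        · have h' : (ReduceCliques G v C₁ C₂).Adj ⟨x, hxv, hx2⟩ ⟨y, hyv, hy2⟩ := by
            rw [hG']
            exact ⟨fun h => hxy.ne (congrArg Subtype.val h), Or.inl (Or.inl hxy)⟩
          rcases hX' h' with h | h
          · exact Or.inl (Or.inl (hmemS _ h))
          · exact Or.inr (Or.inl (hmemS _ h))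
      · have h1 := Set.ncard_union_le S (↑C₂ : Set V)
        rw [Set.ncard_coe_finset] at h1
        omega
    · push_neg at hC₁S
      obtain ⟨a, haC₁, haS⟩ := hC₁S
      obtain ⟨c₂, ⟨hc₂C₂, hnadj⟩, -⟩ := hM a haC₁
      have ha' : a ≠ v ∧ a ∉ C₂ :=
        ⟨fun h => hvC₁ (h ▸ haC₁), fun h => (Finset.disjoint_left.mp hdisj haC₁) h⟩
      have haX' : (⟨a, ha'⟩ : {x : V // x ≠ v ∧ x ∉ C₂}) ∉ X' := fun h => haS (hmemS _ h)
      have hcv : ∀ z, G.Adj c₂ z → ∀ (hz : z ≠ v ∧ z ∉ C₂), z ∈ S := by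
        intro z hz hzp
        have hza : z ≠ a := fun h => hnadj (h ▸ hz.symm)
        have h' : (ReduceCliques G v C₁ C₂).Adj ⟨a, ha'⟩ ⟨z, hzp⟩ := by
          rw [hG']
          exact ⟨fun h => hza (congrArg Subtype.val h).symm,
            Or.inl (Or.inr ⟨haC₁, c₂, hc₂C₂, hnadj, hz⟩)⟩
        rcases hX' h' with h | h
        · exact absurd h haX'
        · exact hmemS _ h
      refine ⟨S ∪ ({v} ∪ (↑C₂ \ {c₂})), ?_, ?_⟩
      · intro x y hxy
        by_cases hxv : x = v
        · exact Or.inl (Or.inr (Or.inl hxv))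
        by_cases hyv : y = v
        · exact Or.inr (Or.inr (Or.inl hyv))
        by_cases hx2 : x ∈ C₂
        · by_cases hxc : x = c₂
          · subst hxc
            by_cases hy2 : y ∈ C₂
            · have hyc : y ≠ x := hxy.ne'
              exact Or.inr (Or.inr (Or.inr ⟨by simpa using hy2, fun h => hyc (by simpa using h)⟩))
            · exact Or.inr (Or.inl (hcv y hxy ⟨hyv, hy2⟩))
          · exact Or.inl (Or.inr (Or.inr ⟨by simpa using hx2, by simpa using hxc⟩))
        by_cases hy2 : y ∈ C₂
        · by_cases hyc : y = c₂
          · subst hyc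
            exact Or.inl (Or.inl (hcv x hxy.symm ⟨hxv, hx2⟩))
          · exact Or.inr (Or.inr (Or.inr ⟨by simpa using hy2, by simpa using hyc⟩))
        · have h' : (ReduceCliques G v C₁ C₂).Adj ⟨x, hxv, hx2⟩ ⟨y, hyv, hy2⟩ := by
            rw [hG']
            exact ⟨fun h => hxy.ne (congrArg Subtype.val h), Or.inl (Or.inl hxy)⟩
          rcases hX' h' with h | h
          · exact Or.inl (Or.inl (hmemS _ h))
          · exact Or.inr (Or.inl (hmemS _ h))
      · have h1 := Set.ncard_union_le S ({v} ∪ (↑C₂ \ {c₂}) : Set V)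
        have h2 : ({v} ∪ (↑C₂ \ {c₂}) : Set V).ncard = C₂.card - 1 + 1 := by
          rw [Set.singleton_union, Set.ncard_insert_of_notMem (fun h => hvC₂ (by simpa using h.1)),
            Set.ncard_diff (by simpa using hc₂C₂), Set.ncard_coe_finset, Set.ncard_singleton]
        omega
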